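/- Let η ∈ D_r with k(η) ≥ 1 and suppose e^{2a(n)} = c n^{−d/k(η)} for a fixed constant c > 0, with b a fixed real. Let R ≥ r be an integer and ζ ∈ D_R a local configuration of radius R. Then there exists a constant M_1 > 0 such that for all admissible n, all vertices x ∈ V_n and all configurations σ ∈ X_n, n^d · μ_{a(n),b}(I_x^ζ = 1 | σ_{δB(x,R)}) ≤ M_1 e^{2a(n)(k(ζ) − k(η))}. -/

import Mathlib

open scoped ENNReal BigOperators
open Filter

namespace Ising

noncomputable section

/-- The `L_p` norm (`1 ≤ p ≤ ∞`) of an integer vector, via the `PiLp` norm on `ℝ^d`. -/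
def lpNorm (p : ℝ≥0∞) [Fact (1 ≤ p)] {d : ℕ} (z : Fin d → ℤ) : ℝ :=
  ‖(WithLp.equiv p (Fin d → ℝ)).symm (fun i => (z i : ℝ))‖

lemma lpNorm_neg (p : ℝ≥0∞) [Fact (1 ≤ p)] {d : ℕ} (z : Fin d → ℤ) :
    lpNorm p (fun i => -(z i)) = lpNorm p z := by
  unfold lpNorm
  have h : ((WithLp.equiv p (Fin d → ℝ)).symm (fun i => ((-(z i) : ℤ) : ℝ)))
      = -((WithLp.equiv p (Fin d → ℝ)).symm fun i => ((z i : ℤ) : ℝ)) := by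
    have : (fun i => ((-(z i) : ℤ) : ℝ)) = -(fun i => ((z i : ℤ) : ℝ)) := by
      funext i; simp
    rw [this]; rfl
  rw [h, norm_neg]

/-- Vertex set of the `d`-dimensional lattice torus of size `n`:
`{0, …, n-1}^d` with componentwise arithmetic modulo `n`. -/
abbrev Vtx (d n : ℕ) := Fin d → ZMod n

/-- Configurations: a spin (`true` = `+1`, `false` = `-1`) at each vertex. -/
abbrev Conf (d n : ℕ) := Vtx d n → Bool

/-- The spin value (`±1`) of a Boolean. -/
def spin (s : Bool) : ℝ := if s then 1 else -1

/-- The lattice torus `G_n`: distinct vertices `x, y` are adjacent iff `y - x`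
(componentwise modulo `n`) admits an integer representative `z` with `‖z‖_p ≤ ρ`. -/
def torus (d ρ : ℕ) (p : ℝ≥0∞) [Fact (1 ≤ p)] (n : ℕ) : SimpleGraph (Vtx d n) where
  Adj x y := x ≠ y ∧ ∃ z : Fin d → ℤ,
    (∀ i, ((z i : ZMod n) = y i - x i)) ∧ lpNorm p z ≤ (ρ : ℝ)
  symm := by
    constructor
    rintro x y ⟨hxy, z, hz, hn⟩
    refine ⟨hxy.symm, fun i => -(z i), fun i => ?_, by rw [lpNorm_neg]; exact hn⟩
    push_cast
    rw [hz i]; ring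
  loopless := ⟨fun x h => h.1 rfl⟩

/-- The corresponding (infinite) lattice graph on `ℤ^d`, used as a reference to define
local configurations: distinct `x, y` are adjacent iff `‖y - x‖_p ≤ ρ`. -/
def latticeZ (d ρ : ℕ) (p : ℝ≥0∞) [Fact (1 ≤ p)] : SimpleGraph (Fin d → ℤ) where
  Adj x y := x ≠ y ∧ lpNorm p (fun i => y i - x i) ≤ (ρ : ℝ)
  symm := by
    constructor
    rintro x y ⟨hxy, hn⟩
    refine ⟨hxy.symm, ?_⟩
    have h : (fun i => x i - y i) = (fun i => -(y i - x i)) := by funext i; ring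
    rw [h, lpNorm_neg]; exact hn
  loopless := ⟨fun x h => h.1 rfl⟩

/-- The ball `B(x,r)` of center `x` and radius `r` for the graph distance. -/
def gball {V : Type*} (G : SimpleGraph V) (x : V) (r : ℕ) : Set V :=
  {y | G.Reachable x y ∧ G.dist x y ≤ r}

/-- The reference ball `B(0,r)` (in `ℤ^d`). -/
def refBall (d ρ : ℕ) (p : ℝ≥0∞) [Fact (1 ≤ p)] (r : ℕ) : Set (Fin d → ℤ) :=
  gball (latticeZ d ρ p) 0 r

/-- A local configuration of radius `r`: an element of `D_r = {-1,+1}^{B(0,r)}`. -/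
abbrev LocalConfig (d ρ : ℕ) (p : ℝ≥0∞) [Fact (1 ≤ p)] (r : ℕ) :=
  ↥(refBall d ρ p r) → Bool

/-- `k(η)`: the number of positive vertices of a local configuration `η`. -/
def kOf (d ρ : ℕ) (p : ℝ≥0∞) [Fact (1 ≤ p)] (r : ℕ) (η : LocalConfig d ρ p r) : ℕ :=
  Set.ncard {v : ↥(refBall d ρ p r) | η v = true}

/-- The common degree of the vertices (number of neighbors of `0` in the lattice). -/
def degZ (d ρ : ℕ) (p : ℝ≥0∞) [Fact (1 ≤ p)] : ℕ :=
  Set.ncard {z : Fin d → ℤ | (latticeZ d ρ p).Adj 0 z}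

/-- The perimeter `γ(η) = V·k(η) - 2·#{edges with both endpoints positive}`; the
number of ordered adjacent pairs of positive vertices is twice the number of such edges. -/
def perim (d ρ : ℕ) (p : ℝ≥0∞) [Fact (1 ≤ p)] (r : ℕ) (η : LocalConfig d ρ p r) : ℕ :=
  degZ d ρ p * kOf d ρ p r η -
    Set.ncard {q : ↥(refBall d ρ p r) × ↥(refBall d ρ p r) |
      (latticeZ d ρ p).Adj q.1.1 q.2.1 ∧ η q.1 = true ∧ η q.2 = true}

/-- `η` is clean if every vertex at graph distance exactly `r` from `0` is negative. -/
def Clean (d ρ : ℕ) (p : ℝ≥0∞) [Fact (1 ≤ p)] (r : ℕ) (η : LocalConfig d ρ p r) : Prop :=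
  ∀ v : ↥(refBall d ρ p r), (latticeZ d ρ p).dist 0 v.1 = r → η v = false

/-- The translate `η_x` of `η` occurs at `x` in the configuration `σ`. -/
def occursAt (d ρ : ℕ) (p : ℝ≥0∞) [Fact (1 ≤ p)] (r n : ℕ) (η : LocalConfig d ρ p r)
    (x : Vtx d n) (σ : Conf d n) : Prop :=
  ∀ v : ↥(refBall d ρ p r), σ (x + fun i => ((v.1 i : ZMod n))) = η v

/-- The indicator `I_x^η` (as a real number). -/
def occInd (d ρ : ℕ) (p : ℝ≥0∞) [Fact (1 ≤ p)] (r n : ℕ) (η : LocalConfig d ρ p r)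
    (x : Vtx d n) (σ : Conf d n) : ℝ := by
  classical exact if occursAt d ρ p r n η x σ then 1 else 0

/-- `X_n(η) = Σ_x I_x^η`: the number of copies of `η` in `G_n`. -/
def Xcount (d ρ : ℕ) (p : ℝ≥0∞) [Fact (1 ≤ p)] (r n : ℕ) (η : LocalConfig d ρ p r)
    (σ : Conf d n) : ℕ :=
  Set.ncard {x : Vtx d n | occursAt d ρ p r n η x σ}

/-- The interaction term `Σ_{{x,y} ∈ E_n} σ(x)σ(y)`. -/
def pairSum (d ρ : ℕ) (p : ℝ≥0∞) [Fact (1 ≤ p)] (n : ℕ) (σ : Conf d n) : ℝ :=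
  ∑' e : ↥(torus d ρ p n).edgeSet,
    Sym2.lift ⟨fun x y => spin (σ x) * spin (σ y), fun _ _ => mul_comm _ _⟩
      (e : Sym2 (Vtx d n))

/-- The Hamiltonian `a Σ_x σ(x) + b Σ_{{x,y} ∈ E_n} σ(x)σ(y)`. -/
def hamiltonian (d ρ : ℕ) (p : ℝ≥0∞) [Fact (1 ≤ p)] (n : ℕ) (a b : ℝ) (σ : Conf d n) : ℝ :=
  a * (∑' x : Vtx d n, spin (σ x)) + b * pairSum d ρ p n σ

/-- The (unnormalized) Gibbs weight of a configuration. -/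
def weight (d ρ : ℕ) (p : ℝ≥0∞) [Fact (1 ≤ p)] (n : ℕ) (a b : ℝ) (σ : Conf d n) : ℝ :=
  Real.exp (hamiltonian d ρ p n a b σ)

/-- The partition function `Z_{a,b}`. -/
def partZ (d ρ : ℕ) (p : ℝ≥0∞) [Fact (1 ≤ p)] (n : ℕ) (a b : ℝ) : ℝ :=
  ∑' σ : Conf d n, weight d ρ p n a b σ

/-- The Ising (Gibbs) probability `μ_{a,b}(A)` of an event `A ⊆ X_n`. -/
def prob (d ρ : ℕ) (p : ℝ≥0∞) [Fact (1 ≤ p)] (n : ℕ) (a b : ℝ) (A : Set (Conf d n)) : ℝ :=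
  (∑' σ : ↥A, weight d ρ p n a b (σ : Conf d n)) / partZ d ρ p n a b

/-- The expectation `E_{a,b}[f]`. -/
def expect (d ρ : ℕ) (p : ℝ≥0∞) [Fact (1 ≤ p)] (n : ℕ) (a b : ℝ) (f : Conf d n → ℝ) : ℝ :=
  (∑' σ : Conf d n, weight d ρ p n a b σ * f σ) / partZ d ρ p n a b

/-- The variance `Var_{a,b}[f]`. -/
def varE (d ρ : ℕ) (p : ℝ≥0∞) [Fact (1 ≤ p)] (n : ℕ) (a b : ℝ) (f : Conf d n → ℝ) : ℝ :=
  expect d ρ p n a b (fun σ => (f σ - expect d ρ p n a b f) ^ 2)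

/-- The event `{I_x^η = 1}`. -/
def event (d ρ : ℕ) (p : ℝ≥0∞) [Fact (1 ≤ p)] (r n : ℕ) (η : LocalConfig d ρ p r)
    (x : Vtx d n) : Set (Conf d n) :=
  {σ | occursAt d ρ p r n η x σ}

/-- The event that a configuration agrees with `σ₀` on `W`. -/
def agreeOn (d n : ℕ) (W : Set (Vtx d n)) (σ₀ : Conf d n) : Set (Conf d n) :=
  {τ | ∀ x ∈ W, τ x = σ₀ x}

/-- The conditional probability `μ_{a,b}(A | σ₀ on W)`. -/
def condProb (d ρ : ℕ) (p : ℝ≥0∞) [Fact (1 ≤ p)] (n : ℕ) (a b : ℝ) (A : Set (Conf d n))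
    (W : Set (Vtx d n)) (σ₀ : Conf d n) : ℝ :=
  prob d ρ p n a b (A ∩ agreeOn d n W σ₀) / prob d ρ p n a b (agreeOn d n W σ₀)

/-- The exterior boundary `δV` of a set of vertices of the torus. -/
def boundary (d ρ : ℕ) (p : ℝ≥0∞) [Fact (1 ≤ p)] (n : ℕ) (V : Set (Vtx d n)) :
    Set (Vtx d n) :=
  {y | y ∉ V ∧ ∃ x ∈ V, (torus d ρ p n).Adj x y}

/-- The ball `B(x,R)` in the torus. -/
def tball (d ρ : ℕ) (p : ℝ≥0∞) [Fact (1 ≤ p)] (n : ℕ) (x : Vtx d n) (R : ℕ) :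
    Set (Vtx d n) :=
  gball (torus d ρ p n) x R

/-- The distribution (probability mass function on `ℕ`) of an integer-valued observable. -/
def lawOf (d ρ : ℕ) (p : ℝ≥0∞) [Fact (1 ≤ p)] (n : ℕ) (a b : ℝ) (X : Conf d n → ℕ) :
    ℕ → ℝ :=
  fun m => prob d ρ p n a b {σ | X σ = m}

/-- The distribution on `ℕ` of a real-valued (integer-valued in fact) observable. -/
def lawR (d ρ : ℕ) (p : ℝ≥0∞) [Fact (1 ≤ p)] (n : ℕ) (a b : ℝ) (X : Conf d n → ℝ) :
    ℕ → ℝ :=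
  fun m => prob d ρ p n a b {σ | X σ = (m : ℝ)}

/-- The Poisson distribution with parameter `θ`, as a pmf on `ℕ`. -/
def poissonPMF (θ : ℝ) : ℕ → ℝ :=
  fun m => Real.exp (-θ) * θ ^ m / (Nat.factorial m : ℝ)

/-- Total variation distance between two distributions on `ℕ`:
`d_TV(μ,ν) = sup_A |μ(A) - ν(A)|`. -/
def dTV (f g : ℕ → ℝ) : ℝ :=
  ⨆ A : Set ℕ, |(∑' m : ↥A, f (m : ℕ)) - ∑' m : ↥A, g (m : ℕ)|

/-- The clean extension `η̊ ∈ D_{r+1}` of `η ∈ D_r`: it agrees with `η` on `B(0,r)` and is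
negative at every vertex at distance exactly `r+1` from `0`. -/
def ringExt (d ρ : ℕ) (p : ℝ≥0∞) [Fact (1 ≤ p)] (r : ℕ) (η : LocalConfig d ρ p r) :
    LocalConfig d ρ p (r + 1) := by
  classical exact fun v => if h : v.1 ∈ refBall d ρ p r then η ⟨v.1, h⟩ else false

/-- `D_r(η) = {η' ∈ D_r : V_+(η') ⊇ V_+(η)}`. -/
def Dfam (d ρ : ℕ) (p : ℝ≥0∞) [Fact (1 ≤ p)] (r : ℕ) (η : LocalConfig d ρ p r) :
    Set (LocalConfig d ρ p r) :=
  {η' | ∀ v, η v = true → η' v = true}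

/-- `Ī_x^η = Σ_{η' ∈ D_r(η)} I_x^{η'}`. -/
def barInd (d ρ : ℕ) (p : ℝ≥0∞) [Fact (1 ≤ p)] (r n : ℕ) (η : LocalConfig d ρ p r)
    (x : Vtx d n) (σ : Conf d n) : ℝ :=
  ∑' η' : ↥(Dfam d ρ p r η), occInd d ρ p r n (η' : LocalConfig d ρ p r) x σ

/-- `X̄_n(η) = Σ_x Ī_x^η`. -/
def Xbar (d ρ : ℕ) (p : ℝ≥0∞) [Fact (1 ≤ p)] (r n : ℕ) (η : LocalConfig d ρ p r)
    (σ : Conf d n) : ℝ :=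
  ∑' x : Vtx d n, barInd d ρ p r n η x σ

/-- The closed neighbourhood `B̄ = B ∪ δB` of a torus ball. -/
def cball (d ρ : ℕ) (p : ℝ≥0∞) [Fact (1 ≤ p)] (n : ℕ) (x : Vtx d n) (r : ℕ) :
    Set (Vtx d n) :=
  tball d ρ p n x r ∪ boundary d ρ p n (tball d ρ p n x r)

/-- One step of the connectivity relation between the balls of radius `r` centered at the
entries of a tuple: `B̄(x_i) ∩ B(x_j) ≠ ∅`. -/
def stepRel (d ρ : ℕ) (p : ℝ≥0∞) [Fact (1 ≤ p)] (n r : ℕ) {l : ℕ} (x : Fin l → Vtx d n)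
    (i j : Fin l) : Prop :=
  (cball d ρ p n (x i) r ∩ tball d ρ p n (x j) r).Nonempty

/-- The number of equivalence classes, for the connectivity relation, of the set of balls
`{B(x_1,r), …, B(x_l,r)}`. -/
def numClasses (d ρ : ℕ) (p : ℝ≥0∞) [Fact (1 ≤ p)] (n r : ℕ) {l : ℕ}
    (x : Fin l → Vtx d n) : ℕ :=
  Set.ncard (Set.range fun i : Fin l =>
    {j : Fin l | Relation.EqvGen (stepRel d ρ p n r x) i j})

/-- `C_l(s)`: the set of `l`-tuples of vertices whose set of balls of radius `r` is composed
of exactly `s` equivalence classes for the connectivity relation. -/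
def tupleClass (d ρ : ℕ) (p : ℝ≥0∞) [Fact (1 ≤ p)] (n r l s : ℕ) :
    Set (Fin l → Vtx d n) :=
  {x | numClasses d ρ p n r x = s}


/-! ### Auxiliary lemmas for `stmt_2` -/

section Aux2

variable {d ρ : ℕ} {p : ℝ≥0∞} [Fact (1 ≤ p)]

lemma abs_coord_le_lpNorm (z : Fin d → ℤ) (i : Fin d) : |(z i : ℝ)| ≤ lpNorm p z := by
  have hp1 : (1 : ℝ≥0∞) ≤ p := Fact.out
  unfold lpNorm
  set f := (WithLp.equiv p (Fin d → ℝ)).symm (fun j => (z j : ℝ)) with hf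
  have hfi : ∀ j, f j = (z j : ℝ) := fun j => rfl
  by_cases hp : p = ⊤
  · subst hp
    rw [PiLp.norm_eq_ciSup]
    have h := le_ciSup (f := fun j => ‖f j‖) (Set.Finite.bddAbove (Set.finite_range _)) i
    simpa [hfi, Real.norm_eq_abs] using h
  · have hq : 0 < p.toReal := ENNReal.toReal_pos (fun h0 => by simp [h0] at hp1) hp
    rw [PiLp.norm_eq_sum hq]
    have h2 : |(z i : ℝ)| ^ p.toReal ≤ ∑ j, ‖f j‖ ^ p.toReal := by
      have h3 := Finset.single_le_sum (f := fun j => ‖f j‖ ^ p.toReal)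
        (fun j _ => Real.rpow_nonneg (norm_nonneg _) _) (Finset.mem_univ i)
      simpa [hfi, Real.norm_eq_abs] using h3
    calc |(z i : ℝ)| = (|(z i : ℝ)|) ^ (p.toReal * (1 / p.toReal)) := by
          rw [mul_one_div_cancel (ne_of_gt hq), Real.rpow_one]
      _ = (|(z i : ℝ)| ^ p.toReal) ^ (1 / p.toReal) := Real.rpow_mul (abs_nonneg _) _ _
      _ ≤ (∑ j, ‖f j‖ ^ p.toReal) ^ (1 / p.toReal) :=
          Real.rpow_le_rpow (Real.rpow_nonneg (abs_nonneg _) _) h2 (by positivity)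

lemma abs_coord_le_of_lpNorm_le {z : Fin d → ℤ} (h : lpNorm p z ≤ (ρ : ℝ)) (i : Fin d) :
    |z i| ≤ (ρ : ℤ) := by
  have h2 := (abs_coord_le_lpNorm (p := p) z i).trans h
  exact_mod_cast h2

lemma walk_coord_bound : ∀ {u v : Fin d → ℤ} (w : (latticeZ d ρ p).Walk u v) (i : Fin d),
    |v i - u i| ≤ (ρ : ℤ) * w.length := by
  intro u v w
  induction w with
  | nil => simp
  | @cons a b v' h q ih =>
    intro i
    have h1 : |b i - a i| ≤ (ρ : ℤ) := abs_coord_le_of_lpNorm_le (And.right h) i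
    calc |v' i - a i| ≤ |v' i - b i| + |b i - a i| := abs_sub_le _ _ _
      _ ≤ (ρ : ℤ) * q.length + ρ := add_le_add (ih i) h1
      _ = (ρ : ℤ) * (q.length + 1) := by ring
      _ = (ρ : ℤ) * ((SimpleGraph.Walk.cons h q).length : ℤ) := by
          rw [SimpleGraph.Walk.length_cons]; push_cast; ring

lemma refBall_coord {R : ℕ} {v : Fin d → ℤ} (hv : v ∈ refBall d ρ p R) (i : Fin d) :
    |v i| ≤ (ρ : ℤ) * R := by
  obtain ⟨hreach, hdist⟩ := hv
  obtain ⟨w, hw⟩ := hreach.exists_walk_length_eq_dist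
  have h := walk_coord_bound w i
  simp only [Pi.zero_apply, sub_zero] at h
  refine h.trans ?_
  have hwR : w.length ≤ R := by rw [hw]; exact hdist
  exact mul_le_mul_of_nonneg_left (by exact_mod_cast hwR) (by positivity)

lemma refBall_finite (d ρ R : ℕ) (p : ℝ≥0∞) [Fact (1 ≤ p)] :
    (refBall d ρ p R).Finite := by
  apply Set.Finite.subset (Set.Finite.pi
    (fun i : Fin d => Set.finite_Icc (-((ρ : ℤ) * R)) ((ρ : ℤ) * R)))
  intro v hv
  simp only [Set.mem_pi, Set.mem_univ, Set.mem_Icc, forall_true_left]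
  intro i
  exact abs_le.mp (refBall_coord hv i)

noncomputable instance refBallFintype (d ρ R : ℕ) (p : ℝ≥0∞) [Fact (1 ≤ p)] :
    Fintype ↥(refBall d ρ p R) :=
  (refBall_finite d ρ R p).fintype

lemma intCast_zmod_ne_zero {n : ℕ} {z : ℤ} (hz : z ≠ 0) (h : |z| < (n : ℤ)) :
    (z : ZMod n) ≠ 0 := by
  intro h0
  rw [ZMod.intCast_zmod_eq_zero_iff_dvd] at h0
  have h1 : (n : ℤ) ∣ |z| := (dvd_abs _ _).mpr h0
  have h2 := Int.le_of_dvd (abs_pos.mpr hz) h1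
  omega

/-- The embedding of the reference ball into the torus, centered at `x`. -/
def embv (d ρ : ℕ) (p : ℝ≥0∞) [Fact (1 ≤ p)] (R n : ℕ) (x : Vtx d n)
    (v : ↥(refBall d ρ p R)) : Vtx d n :=
  x + fun i => ((v.1 i : ZMod n))

/-- The configuration obtained by setting all spins on the (embedded) ball to `-1`. -/
def flipConf (d ρ : ℕ) (p : ℝ≥0∞) [Fact (1 ≤ p)] (R n : ℕ) (x : Vtx d n)
    (τ : Conf d n) : Conf d n := by
  classical exact fun y => if y ∈ Set.range (embv d ρ p R n x) then false else τ y

lemma embv_mem_tball {R n : ℕ} (hρn : ρ < n) (x : Vtx d n) (v : ↥(refBall d ρ p R)) :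
    embv d ρ p R n x v ∈ tball d ρ p n x R := by
  have hadj : ∀ {u w : Fin d → ℤ}, (latticeZ d ρ p).Adj u w →
      (torus d ρ p n).Adj (x + fun i => ((u i : ZMod n))) (x + fun i => ((w i : ZMod n))) := by
    intro u w h
    obtain ⟨hne, hnorm⟩ := And.intro (And.left h) (And.right h)
    obtain ⟨i, hi⟩ := Function.ne_iff.mp hne
    have hzi : |w i - u i| ≤ (ρ : ℤ) := abs_coord_le_of_lpNorm_le hnorm i
    have hne0 : ((w i - u i : ℤ) : ZMod n) ≠ 0 :=
      intCast_zmod_ne_zero (sub_ne_zero.mpr (Ne.symm hi))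
        (lt_of_le_of_lt hzi (by exact_mod_cast hρn))
    constructor
    · intro hEq
      have h2 : ((u i : ℤ) : ZMod n) = ((w i : ℤ) : ZMod n) := congrFun (add_left_cancel hEq) i
      exact hne0 (by rw [Int.cast_sub, h2, sub_self])
    · refine ⟨fun i => w i - u i, fun j => ?_, hnorm⟩
      simp only [Pi.add_apply]
      push_cast
      ring
  let f : (latticeZ d ρ p) →g (torus d ρ p n) :=
    ⟨fun w => x + fun i => ((w i : ZMod n)), fun h => hadj h⟩
  obtain ⟨hreach, hdist⟩ := v.2
  obtain ⟨w0, hw0⟩ := hreach.exists_walk_length_eq_dist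
  have hx0 : f 0 = x := by
    show (x + fun i => (((0 : Fin d → ℤ) i : ZMod n))) = x
    have h0 : (fun i : Fin d => (((0 : Fin d → ℤ) i : ℤ) : ZMod n)) = 0 :=
      funext fun i => Int.cast_zero
    rw [h0, add_zero]
  have hre : (torus d ρ p n).Reachable (f 0) (f v.1) := ⟨w0.map f⟩
  have hd : (torus d ρ p n).dist (f 0) (f v.1) ≤ R := by
    calc (torus d ρ p n).dist (f 0) (f v.1) ≤ (w0.map f).length := SimpleGraph.dist_le _
      _ = w0.length := SimpleGraph.Walk.length_map f w0
      _ = (latticeZ d ρ p).dist 0 v.1 := hw0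
      _ ≤ R := hdist
  rw [hx0] at hre hd
  exact ⟨hre, hd⟩

lemma embv_injective {R n : ℕ} (hn : 2 * ρ * (R + 1) < n) (x : Vtx d n) :
    Function.Injective (embv d ρ p R n x) := by
  intro v w h
  have h2 : (fun i => ((v.1 i : ZMod n))) = (fun i => ((w.1 i : ZMod n))) :=
    add_left_cancel h
  apply Subtype.ext
  funext i
  have h3 : ((v.1 i : ℤ) : ZMod n) = ((w.1 i : ℤ) : ZMod n) := congrFun h2 i
  by_contra hne
  have hcast : ((2 * ρ * (R + 1) : ℕ) : ℤ) < (n : ℤ) := by exact_mod_cast hn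
  push_cast at hcast
  have b1 := refBall_coord v.2 i
  have b2 := refBall_coord w.2 i
  have hlt : |v.1 i - w.1 i| < (n : ℤ) := by
    calc |v.1 i - w.1 i| ≤ |v.1 i| + |w.1 i| := abs_sub _ _
      _ ≤ (ρ : ℤ) * R + (ρ : ℤ) * R := add_le_add b1 b2
      _ < n := by nlinarith [Int.ofNat_nonneg ρ]
  exact intCast_zmod_ne_zero (sub_ne_zero.mpr hne) hlt
    (by rw [Int.cast_sub, h3, sub_self])

lemma flipConf_agree {R n : ℕ} (hρn : ρ < n) (x : Vtx d n) (σ τ : Conf d n)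
    (hτ : τ ∈ agreeOn d n (boundary d ρ p n (tball d ρ p n x R)) σ) :
    flipConf d ρ p R n x τ ∈ agreeOn d n (boundary d ρ p n (tball d ρ p n x R)) σ := by
  intro y hy
  have hyS : y ∉ Set.range (embv d ρ p R n x) := by
    rintro ⟨v, rfl⟩
    exact hy.1 (embv_mem_tball hρn x v)
  simp only [flipConf]
  rw [if_neg hyS]
  exact hτ y hy

lemma flipConf_inj {R n : ℕ} (x : Vtx d n) (ζ : LocalConfig d ρ p R)
    {τ₁ τ₂ : Conf d n} (h1 : occursAt d ρ p R n ζ x τ₁) (h2 : occursAt d ρ p R n ζ x τ₂)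
    (h : flipConf d ρ p R n x τ₁ = flipConf d ρ p R n x τ₂) : τ₁ = τ₂ := by
  funext y
  by_cases hy : y ∈ Set.range (embv d ρ p R n x)
  · obtain ⟨v, rfl⟩ := hy
    exact (h1 v).trans (h2 v).symm
  · have h3 := congrFun h y
    simp only [flipConf] at h3
    rwa [if_neg hy, if_neg hy] at h3

lemma kOf_eq_card (d ρ R : ℕ) (p : ℝ≥0∞) [Fact (1 ≤ p)] (ζ : LocalConfig d ρ p R) :
    kOf d ρ p R ζ = (Finset.univ.filter (fun v : ↥(refBall d ρ p R) => ζ v = true)).card := by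
  classical
  rw [kOf, Set.ncard_eq_toFinset_card']
  congr 1
  ext v
  simp

lemma sumSpin_diff {R n : ℕ} [NeZero n] (hn : 2 * ρ * (R + 1) < n) (x : Vtx d n)
    (ζ : LocalConfig d ρ p R) (τ : Conf d n) (hτ : occursAt d ρ p R n ζ x τ) :
    (∑ y : Vtx d n, spin (τ y)) - ∑ y : Vtx d n, spin (flipConf d ρ p R n x τ y)
      = 2 * (kOf d ρ p R ζ : ℝ) := by
  classical
  have hinj : Function.Injective (embv d ρ p R n x) := embv_injective hn x
  rw [← Finset.sum_sub_distrib]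
  rw [← Finset.sum_subset (Finset.subset_univ (Set.range (embv d ρ p R n x)).toFinset)
    (fun y _ hy => ?_)]
  · rw [Set.toFinset_range, Finset.sum_image (fun a _ b _ h => hinj h)]
    have hterm : ∀ v : ↥(refBall d ρ p R),
        spin (τ (embv d ρ p R n x v)) - spin (flipConf d ρ p R n x τ (embv d ρ p R n x v))
          = if ζ v = true then (2 : ℝ) else 0 := by
      intro v
      have h1 : τ (embv d ρ p R n x v) = ζ v := hτ v
      have h2 : flipConf d ρ p R n x τ (embv d ρ p R n x v) = false := by
        simp only [flipConf]
        rw [if_pos ⟨v, rfl⟩]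
      rw [h1, h2]
      cases (ζ v) <;> norm_num [spin]
    rw [Finset.sum_congr rfl (fun v _ => hterm v)]
    rw [Finset.sum_ite, Finset.sum_const, Finset.sum_const_zero, add_zero,
      ← kOf_eq_card, nsmul_eq_mul]
    ring
  · have hy' : y ∉ Set.range (embv d ρ p R n x) := by simpa [Set.mem_toFinset] using hy
    simp only [flipConf]
    rw [if_neg hy']
    ring

lemma spin_prod_diff_le (σ1 σ2 : Conf d n) (a b : Vtx d n) :
    |spin (σ1 a) * spin (σ1 b) - spin (σ2 a) * spin (σ2 b)| ≤ 2 := by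
  cases σ1 a <;> cases σ1 b <;> cases σ2 a <;> cases σ2 b <;> norm_num [spin]

lemma torus_degree_le (d ρ n : ℕ) (p : ℝ≥0∞) [Fact (1 ≤ p)] [NeZero n]
    [DecidableRel (torus d ρ p n).Adj] (y : Vtx d n) :
    (torus d ρ p n).degree y ≤
      (Fintype.piFinset fun _ : Fin d => Finset.Icc (-(ρ : ℤ)) (ρ : ℤ)).card := by
  classical
  rw [← SimpleGraph.card_neighborFinset_eq_degree]
  set f : Vtx d n → (Fin d → ℤ) := fun w =>
    if h : (torus d ρ p n).Adj y w then Classical.choose (And.right h) else 0 with hf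
  have hspec : ∀ w, (torus d ρ p n).Adj y w →
      (∀ i, ((f w i : ZMod n)) = w i - y i) ∧ lpNorm p (f w) ≤ (ρ : ℝ) := by
    intro w h
    have := Classical.choose_spec (And.right h)
    simp only [hf, dif_pos h]
    exact this
  apply Finset.card_le_card_of_injOn f
  · intro w hw
    have hadj : (torus d ρ p n).Adj y w := by
      rwa [Finset.mem_coe, SimpleGraph.mem_neighborFinset] at hw
    rw [Finset.mem_coe, Fintype.mem_piFinset]
    intro i
    rw [Finset.mem_Icc, ← abs_le]
    exact abs_coord_le_of_lpNorm_le (hspec w hadj).2 i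
  · intro w hw w' hw' hww
    rw [Finset.mem_coe, SimpleGraph.mem_neighborFinset] at hw hw'
    funext i
    have e1 := (hspec w hw).1 i
    have e2 := (hspec w' hw').1 i
    rw [hww] at e1
    have : w i - y i = w' i - y i := by rw [← e1, ← e2]
    have h3 : w i = w' i := by
      have := sub_left_inj.mp this
      exact this
    exact h3

lemma pairSum_diff {R n : ℕ} [NeZero n] (hn : 2 * ρ * (R + 1) < n) (x : Vtx d n)
    (τ : Conf d n) :
    |pairSum d ρ p n τ - pairSum d ρ p n (flipConf d ρ p R n x τ)| ≤
      2 * ((Fintype.card ↥(refBall d ρ p R)) *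
        (Fintype.piFinset fun _ : Fin d => Finset.Icc (-(ρ : ℤ)) (ρ : ℤ)).card) := by
  classical
  haveI : DecidableRel (torus d ρ p n).Adj := Classical.decRel _
  set G := torus d ρ p n with hG
  set τ' := flipConf d ρ p R n x τ with hτ'
  set S : Set (Vtx d n) := Set.range (embv d ρ p R n x) with hS
  have hinj : Function.Injective (embv d ρ p R n x) := embv_injective hn x
  set g : Conf d n → Sym2 (Vtx d n) → ℝ := fun σ' e =>
    Sym2.lift ⟨fun a b => spin (σ' a) * spin (σ' b), fun _ _ => mul_comm _ _⟩ e with hg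
  set P : ↥G.edgeSet → Prop := fun e => ∃ y ∈ S, y ∈ (e : Sym2 (Vtx d n)) with hP
  have habs2 : ∀ e' : Sym2 (Vtx d n), |g τ e' - g τ' e'| ≤ 2 := by
    intro e'
    induction e' using Sym2.inductionOn with
    | hf a b => simpa only [hg, Sym2.lift_mk] using spin_prod_diff_le τ τ' a b
  have huntouch2 : ∀ e' : Sym2 (Vtx d n), (∀ y ∈ e', y ∉ S) → g τ e' = g τ' e' := by
    intro e'
    induction e' using Sym2.inductionOn with
    | hf a b =>
      intro hu
      have ha : τ' a = τ a := by
        simp only [hτ', flipConf]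
        rw [if_neg (hu a (Sym2.mem_mk_left a b))]
      have hb : τ' b = τ b := by
        simp only [hτ', flipConf]
        rw [if_neg (hu b (Sym2.mem_mk_right a b))]
      simp only [hg, Sym2.lift_mk, ha, hb]
  have habs : ∀ e : ↥G.edgeSet, |g τ e - g τ' e| ≤ if P e then (2 : ℝ) else 0 := by
    intro e
    by_cases hPe : P e
    · rw [if_pos hPe]
      exact habs2 e
    · rw [if_neg hPe]
      have huntouched : ∀ y ∈ (e : Sym2 (Vtx d n)), y ∉ S := by
        intro y hy hyS
        exact hPe ⟨y, hyS, hy⟩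
      rw [huntouch2 e huntouched, sub_self, abs_zero]
  have hcard : (Finset.univ.filter (fun e : ↥G.edgeSet => P e)).card ≤
      (Fintype.card ↥(refBall d ρ p R)) *
        (Fintype.piFinset fun _ : Fin d => Finset.Icc (-(ρ : ℤ)) (ρ : ℤ)).card := by
    have hsub : ∀ e ∈ Finset.univ.filter (fun e : ↥G.edgeSet => P e),
        (e : Sym2 (Vtx d n)) ∈ S.toFinset.biUnion (fun y => G.incidenceFinset y) := by
      intro e he
      rw [Finset.mem_filter] at he
      obtain ⟨y, hyS, hye⟩ := he.2
      rw [Finset.mem_biUnion]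
      have hmem : (e : Sym2 (Vtx d n)) ∈ G.incidenceFinset y := by
        rw [SimpleGraph.mem_incidenceFinset]
        exact ⟨e.2, hye⟩
      exact ⟨y, Set.mem_toFinset.mpr hyS, hmem⟩
    calc (Finset.univ.filter (fun e : ↥G.edgeSet => P e)).card
        ≤ (S.toFinset.biUnion (fun y => G.incidenceFinset y)).card :=
          Finset.card_le_card_of_injOn (fun e => (e : Sym2 (Vtx d n))) hsub
            (fun e1 _ e2 _ h => Subtype.ext h)
      _ ≤ ∑ y ∈ S.toFinset, (G.incidenceFinset y).card := Finset.card_biUnion_le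
      _ = ∑ y ∈ S.toFinset, G.degree y := by
          refine Finset.sum_congr rfl (fun y _ => ?_)
          exact SimpleGraph.card_incidenceFinset_eq_degree G y
      _ ≤ ∑ _y ∈ S.toFinset,
            (Fintype.piFinset fun _ : Fin d => Finset.Icc (-(ρ : ℤ)) (ρ : ℤ)).card :=
          Finset.sum_le_sum (fun y _ => torus_degree_le d ρ n p y)
      _ = S.toFinset.card *
            (Fintype.piFinset fun _ : Fin d => Finset.Icc (-(ρ : ℤ)) (ρ : ℤ)).card := by
          rw [Finset.sum_const, smul_eq_mul]
      _ = (Fintype.card ↥(refBall d ρ p R)) *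
            (Fintype.piFinset fun _ : Fin d => Finset.Icc (-(ρ : ℤ)) (ρ : ℤ)).card := by
          congr 1
          rw [Set.toFinset_card]
          exact (Fintype.card_congr (Equiv.ofInjective _ hinj)).symm
  rw [pairSum, pairSum, tsum_fintype, tsum_fintype, ← Finset.sum_sub_distrib]
  calc |∑ e : ↥G.edgeSet, (g τ e - g τ' e)|
      ≤ ∑ e : ↥G.edgeSet, |g τ e - g τ' e| := Finset.abs_sum_le_sum_abs _ _
    _ ≤ ∑ e : ↥G.edgeSet, (if P e then (2 : ℝ) else 0) :=
        Finset.sum_le_sum (fun e _ => habs e)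
    _ = 2 * ((Finset.univ.filter (fun e : ↥G.edgeSet => P e)).card : ℝ) := by
        rw [Finset.sum_ite, Finset.sum_const, Finset.sum_const_zero, add_zero,
          nsmul_eq_mul]
        ring
    _ ≤ 2 * ((Fintype.card ↥(refBall d ρ p R)) *
          (Fintype.piFinset fun _ : Fin d => Finset.Icc (-(ρ : ℤ)) (ρ : ℤ)).card) := by
        have h2 : ((Finset.univ.filter (fun e : ↥G.edgeSet => P e)).card : ℝ) ≤
            (((Fintype.card ↥(refBall d ρ p R)) *
              (Fintype.piFinset fun _ : Fin d => Finset.Icc (-(ρ : ℤ)) (ρ : ℤ)).card : ℕ) : ℝ) := by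
          exact_mod_cast hcard
        push_cast at h2 ⊢
        linarith

lemma hamiltonian_eq {n : ℕ} [NeZero n] (aa bb : ℝ) (σ' : Conf d n) :
    hamiltonian d ρ p n aa bb σ' =
      aa * (∑ y : Vtx d n, spin (σ' y)) + bb * pairSum d ρ p n σ' := by
  rw [hamiltonian, tsum_fintype]

lemma prob_eq {n : ℕ} [NeZero n] (aa bb : ℝ) (A : Set (Conf d n)) [Fintype ↥A] :
    prob d ρ p n aa bb A =
      (∑ τ : ↥A, weight d ρ p n aa bb τ.1) / partZ d ρ p n aa bb := by
  rw [prob, tsum_fintype]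

end Aux2

/-- **Lemma (conditional probability bound).**  If `e^{2a(n)} = c n^{-d/k(η)}`, `R ≥ r` and
`ζ ∈ D_R`, then there is `M₁ > 0` such that for all admissible `n`, all `x` and all `σ`,
`n^d μ_{a(n),b}(I_x^ζ = 1 | σ_{δB(x,R)}) ≤ M₁ e^{2a(n)(k(ζ) - k(η))}`. -/
theorem stmt_2
    (d ρ r R : ℕ) (hd : 1 ≤ d) (hρ : 1 ≤ ρ) (hrR : r ≤ R) (p : ℝ≥0∞) [Fact (1 ≤ p)]
    (η : LocalConfig d ρ p r) (hk : 1 ≤ kOf d ρ p r η)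
    (ζ : LocalConfig d ρ p R)
    (c : ℝ) (hc : 0 < c) (b : ℝ) (a : ℕ → ℝ)
    (ha : ∀ n : ℕ, 0 < n →
      Real.exp (2 * a n) = c * (n : ℝ) ^ (-(d : ℝ) / (kOf d ρ p r η : ℝ))) :
    ∃ M₁ : ℝ, 0 < M₁ ∧ ∀ n : ℕ, 2 * ρ * (R + 1) < n → ∀ x : Vtx d n, ∀ σ : Conf d n,
      (n : ℝ) ^ d *
          condProb d ρ p n (a n) b (event d ρ p R n ζ x)
            (boundary d ρ p n (tball d ρ p n x R)) σ
        ≤ M₁ * Real.exp (2 * a n * ((kOf d ρ p R ζ : ℝ) - (kOf d ρ p r η : ℝ))) := by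
  classical
  set kη : ℕ := kOf d ρ p r η with hkηdef
  set kζ : ℕ := kOf d ρ p R ζ with hkζdef
  set K : ℕ := Fintype.card ↥(refBall d ρ p R) with hKdef
  set D : ℕ := (Fintype.piFinset fun _ : Fin d => Finset.Icc (-(ρ : ℤ)) (ρ : ℤ)).card with hDdef
  set Cb : ℝ := Real.exp (|b| * (2 * ((K : ℝ) * (D : ℝ)))) with hCbdef
  have hCb : 0 < Cb := Real.exp_pos _
  refine ⟨c ^ kη * Cb, by positivity, ?_⟩
  intro n hn x σ
  have hn0 : 0 < n := lt_of_le_of_lt (Nat.zero_le _) hn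
  haveI : NeZero n := ⟨hn0.ne'⟩
  have hρn : ρ < n := by
    calc ρ ≤ 2 * ρ * (R + 1) := by nlinarith
      _ < n := hn
  haveI : DecidableRel (torus d ρ p n).Adj := Classical.decRel _
  set F : ℝ := Real.exp (2 * a n * (kζ : ℝ)) * Cb with hFdef
  have hF0 : 0 < F := by positivity
  -- Step 1 : the conditional probability is at most `F`.
  have hcond : condProb d ρ p n (a n) b (event d ρ p R n ζ x)
      (boundary d ρ p n (tball d ρ p n x R)) σ ≤ F := by
    set A : Set (Conf d n) := agreeOn d n (boundary d ρ p n (tball d ρ p n x R)) σ with hAdef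
    set E : Set (Conf d n) := event d ρ p R n ζ x with hEdef
    haveI : Fintype ↥(E ∩ A) := Fintype.ofFinite _
    haveI : Fintype ↥A := Fintype.ofFinite _
    have hσA : σ ∈ A := fun y _ => rfl
    have hZ : 0 < partZ d ρ p n (a n) b := by
      rw [partZ, tsum_fintype]
      exact Finset.sum_pos (fun τ _ => Real.exp_pos _) ⟨fun _ => true, Finset.mem_univ _⟩
    -- weight comparison with the flipped configuration
    have hwle : ∀ τ, occursAt d ρ p R n ζ x τ →
        weight d ρ p n (a n) b τ ≤ F * weight d ρ p n (a n) b (flipConf d ρ p R n x τ) := by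
      intro τ hτ
      have hspin := sumSpin_diff (p := p) hn x ζ τ hτ
      have hpair := pairSum_diff (p := p) hn x τ
      rw [weight, weight, hFdef, hCbdef, ← Real.exp_add, ← Real.exp_add]
      apply Real.exp_le_exp.mpr
      rw [hamiltonian_eq, hamiltonian_eq]
      set Sτ := ∑ y : Vtx d n, spin (τ y) with hSτ
      set S' := ∑ y : Vtx d n, spin (flipConf d ρ p R n x τ y) with hS'
      set Pτ := pairSum d ρ p n τ with hPτ
      set P' := pairSum d ρ p n (flipConf d ρ p R n x τ) with hP'
      have h4 : Sτ = S' + 2 * (kζ : ℝ) := by rw [hkζdef]; linarith [hspin]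
      have hb1 : b * (Pτ - P') ≤ |b| * (2 * ((K : ℝ) * (D : ℝ))) := by
        calc b * (Pτ - P') ≤ |b * (Pτ - P')| := le_abs_self _
          _ = |b| * |Pτ - P'| := abs_mul _ _
          _ ≤ |b| * (2 * ((K : ℝ) * (D : ℝ))) := by
              apply mul_le_mul_of_nonneg_left _ (abs_nonneg b)
              calc |Pτ - P'| ≤ 2 * ((K : ℕ) * (D : ℕ) : ℕ) := by
                    rw [hKdef, hDdef]; exact_mod_cast hpair
                _ = 2 * ((K : ℝ) * (D : ℝ)) := by push_cast; ring
      calc a n * Sτ + b * Pτ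
          = a n * S' + 2 * a n * (kζ : ℝ) + (b * P' + b * (Pτ - P')) := by rw [h4]; ring
        _ ≤ 2 * a n * (kζ : ℝ) + |b| * (2 * ((K : ℝ) * (D : ℝ)))
              + (a n * S' + b * P') := by linarith
  -- sum comparison
    have hcompare : (∑ τ : ↥(E ∩ A), weight d ρ p n (a n) b τ.1) ≤
        F * ∑ τ : ↥A, weight d ρ p n (a n) b τ.1 := by
      have step1 : (∑ τ : ↥(E ∩ A), weight d ρ p n (a n) b τ.1) ≤
          ∑ τ : ↥(E ∩ A), F * weight d ρ p n (a n) b (flipConf d ρ p R n x τ.1) :=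
        Finset.sum_le_sum (fun τ _ => hwle τ.1 τ.2.1)
      rw [← Finset.mul_sum] at step1
      refine step1.trans (mul_le_mul_of_nonneg_left ?_ hF0.le)
      have hιinj : Function.Injective
          (fun τ : ↥(E ∩ A) => (⟨flipConf d ρ p R n x τ.1,
            flipConf_agree hρn x σ τ.1 τ.2.2⟩ : ↥A)) := by
        intro τ₁ τ₂ h
        apply Subtype.ext
        exact flipConf_inj x ζ τ₁.2.1 τ₂.2.1 (congrArg Subtype.val h)
      calc (∑ τ : ↥(E ∩ A), weight d ρ p n (a n) b (flipConf d ρ p R n x τ.1))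
          = ∑ s ∈ Finset.univ.image (fun τ : ↥(E ∩ A) => (⟨flipConf d ρ p R n x τ.1,
              flipConf_agree hρn x σ τ.1 τ.2.2⟩ : ↥A)), weight d ρ p n (a n) b s.1 := by
            rw [Finset.sum_image (fun a _ b _ h => hιinj h)]
        _ ≤ ∑ s : ↥A, weight d ρ p n (a n) b s.1 :=
            Finset.sum_le_sum_of_subset_of_nonneg (Finset.subset_univ _)
              (fun s _ _ => (Real.exp_pos _).le)
    have hSA : 0 < ∑ τ : ↥A, weight d ρ p n (a n) b τ.1 :=
      Finset.sum_pos (fun τ _ => Real.exp_pos _) ⟨⟨σ, hσA⟩, Finset.mem_univ _⟩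
    rw [condProb, prob_eq, prob_eq]
    rw [div_div_div_comm, div_self hZ.ne', div_one]
    rw [div_le_iff₀ hSA]
    exact hcompare
  -- Step 2 : arithmetic with the parameters.
  have hkη0 : (0 : ℝ) < (kη : ℝ) := by
    have : (1 : ℝ) ≤ (kη : ℝ) := by exact_mod_cast hk
    linarith
  have h2a := ha n hn0
  have hnR : (0 : ℝ) < (n : ℝ) := by exact_mod_cast hn0
  have hnd : (0 : ℝ) < (n : ℝ) ^ d := by positivity
  have hexpkη : Real.exp (2 * a n * (kη : ℝ)) = c ^ kη * ((n : ℝ) ^ d)⁻¹ := by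
    have hcm : 2 * a n * (kη : ℝ) = (kη : ℝ) * (2 * a n) := by ring
    rw [hcm, Real.exp_nat_mul, h2a, mul_pow]
    congr 1
    rw [← Real.rpow_natCast ((n : ℝ) ^ (-(d : ℝ) / (kη : ℝ))) kη, ← Real.rpow_mul hnR.le]
    rw [div_mul_cancel₀ _ (ne_of_gt hkη0)]
    rw [Real.rpow_neg hnR.le, Real.rpow_natCast]
  have hkey : (c ^ kη * Cb) * Real.exp (2 * a n * ((kζ : ℝ) - (kη : ℝ)))
      = (n : ℝ) ^ d * F := by
    rw [mul_sub, Real.exp_sub, hexpkη, hFdef]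
    have hcne : c ^ kη ≠ 0 := pow_ne_zero _ hc.ne'
    field_simp
  calc (n : ℝ) ^ d * condProb d ρ p n (a n) b (event d ρ p R n ζ x)
        (boundary d ρ p n (tball d ρ p n x R)) σ
      ≤ (n : ℝ) ^ d * F := mul_le_mul_of_nonneg_left hcond hnd.le
    _ = (c ^ kη * Cb) * Real.exp (2 * a n * ((kζ : ℝ) - (kη : ℝ))) := hkey.symm

end

end Ising
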